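/- Let X be a real Banach space, let F be a dense ℚ-linear subspace of X, and let H and I be ℚ-linear subspaces of F with F = H ⊕ I. Let S : F → F be the ℚ-linear projection with image H and kernel I. Then the following are equivalent: (i) S is continuous (with respect to the norm of X); (ii) X = cl H ⊕ cl I, i.e., every element of X is uniquely the sum of an element of the closure of H in X and an element of the closure of I in X. -/
import Mathlib

open Filter Topology

/-- Theorem 5.1: let `X` be a real Banach space, `F` a dense `ℚ`-linear subspace of
`X`, and `F = H ⊕ I` a direct sum of `ℚ`-linear subspaces, with `S : F → F` the
`ℚ`-linear projection with image `H` and kernel `I`.  Then `S` is continuous if and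
only if `X = cl H ⊕ cl I`, i.e. every element of `X` is uniquely the sum of an element
of the closure of `H` in `X` and an element of the closure of `I` in `X`. -/
theorem stmt12 {X : Type*} [NormedAddCommGroup X] [NormedSpace ℝ X] [CompleteSpace X]
    [Module ℚ X] [IsScalarTower ℚ ℝ X]
    (F : Submodule ℚ X) (hF : Dense (F : Set X))
    (H I : Submodule ℚ ↥F) (hc : IsCompl H I)
    (S : ↥F →ₗ[ℚ] ↥F) (hp : S ∘ₗ S = S)
    (hr : LinearMap.range S = H) (hk : LinearMap.ker S = I) :
    Continuous S ↔
      ∀ x : X, ∃! p : X × X,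
        p.1 ∈ closure ((fun y : ↥F => (y : X)) '' (H : Set ↥F)) ∧
        p.2 ∈ closure ((fun y : ↥F => (y : X)) '' (I : Set ↥F)) ∧
        x = p.1 + p.2 := by
  letI : NormedSpace ℚ X := ⟨fun q x => by
    rw [← algebraMap_smul ℝ q x, eq_ratCast (algebraMap ℚ ℝ) q, norm_smul]
    simp [Rat.norm_cast_real, ← Rat.norm_cast_real]⟩
  set A : Submodule ℚ X := (H.map F.subtype).topologicalClosure with hA
  set B : Submodule ℚ X := (I.map F.subtype).topologicalClosure with hB
  have hAset : closure ((fun y : ↥F => (y : X)) '' (H : Set ↥F)) = (A : Set X) := by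
    rw [hA, Submodule.topologicalClosure_coe, Submodule.map_coe]; rfl
  have hBset : closure ((fun y : ↥F => (y : X)) '' (I : Set ↥F)) = (B : Set X) := by
    rw [hB, Submodule.topologicalClosure_coe, Submodule.map_coe]; rfl
  have hAcl : IsClosed (A : Set X) := by
    rw [hA]; exact Submodule.isClosed_topologicalClosure _
  have hBcl : IsClosed (B : Set X) := by
    rw [hB]; exact Submodule.isClosed_topologicalClosure _
  have hAle : ∀ z : ↥F, z ∈ H → (z : X) ∈ A := by
    intro z hz; rw [hA]
    exact Submodule.le_topologicalClosure _ ⟨z, hz, rfl⟩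
  have hBle : ∀ z : ↥F, z ∈ I → (z : X) ∈ B := by
    intro z hz; rw [hB]
    exact Submodule.le_topologicalClosure _ ⟨z, hz, rfl⟩
  have hpp : ∀ w : ↥F, S (S w) = S w := by
    intro w
    have := LinearMap.ext_iff.mp hp w
    simpa using this
  have hSH : ∀ z : ↥F, z ∈ H → S z = z := by
    intro z hz
    rw [← hr] at hz
    obtain ⟨w, rfl⟩ := hz
    exact hpp w
  have hSI : ∀ z : ↥F, z ∈ I → S z = 0 := by
    intro z hz
    rw [← hk] at hz
    exact hz
  have hker : ∀ z : ↥F, z - S z ∈ I := by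
    intro z
    rw [← hk]
    show S (z - S z) = 0
    rw [map_sub, hpp, sub_self]
  simp only [hAset, hBset]
  constructor
  · -- forward
    intro hS
    have hSU : UniformContinuous S :=
      uniformContinuous_of_continuousAt_zero S hS.continuousAt
    have hdisj : ∀ a : X, a ∈ A → a ∈ B → a = 0 := by
      intro a haA haB
      have haA' : a ∈ closure ((fun y : ↥F => (y : X)) '' (H : Set ↥F)) := by
        rw [hAset]; exact haA
      have haB' : a ∈ closure ((fun y : ↥F => (y : X)) '' (I : Set ↥F)) := by
        rw [hBset]; exact haB
      rw [mem_closure_iff_seq_limit] at haA' haB'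
      obtain ⟨u, huH, hua⟩ := haA'
      obtain ⟨w, hwI, hwa⟩ := haB'
      choose u' hu'H hu'e using huH
      choose w' hw'I hw'e using hwI
      have hd : Tendsto (fun n => u' n - w' n) atTop (𝓝 (0 : ↥F)) := by
        rw [tendsto_subtype_rng]
        have : (fun n => ((u' n - w' n : ↥F) : X)) = fun n => u n - w n := by
          funext n; push_cast [hu'e, hw'e]; ring
        rw [this]
        simpa using hua.sub hwa
      have h2 : Tendsto (fun n => S (u' n - w' n)) atTop (𝓝 (S 0)) :=
        (hS.tendsto 0).comp hd
      have h3 : (fun n => S (u' n - w' n)) = u' := by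
        funext n
        rw [map_sub, hSH _ (hu'H n), hSI _ (hw'I n), sub_zero]
      rw [h3, map_zero] at h2
      have h4 : Tendsto u atTop (𝓝 (0 : X)) := by
        have := (tendsto_subtype_rng.mp h2)
        simpa [hu'e] using this
      exact tendsto_nhds_unique hua h4
    intro x
    obtain ⟨u, huF, hux⟩ := mem_closure_iff_seq_limit.mp (hF x)
    set v : ℕ → ↥F := fun n => ⟨u n, huF n⟩ with hv
    have hvx : Tendsto (fun n => (v n : X)) atTop (𝓝 x) := hux
    have hvC : CauchySeq v := by
      rw [Metric.cauchySeq_iff]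
      have := hvx.cauchySeq
      rw [Metric.cauchySeq_iff] at this
      simpa [Subtype.dist_eq] using this
    have hSvC : CauchySeq (fun n => ((S (v n) : ↥F) : X)) :=
      (uniformContinuous_subtype_val.comp hSU).comp_cauchySeq hvC
    obtain ⟨p1, hp1⟩ := cauchySeq_tendsto_of_complete hSvC
    have hp1A : p1 ∈ A :=
      hAcl.mem_of_tendsto hp1 (Eventually.of_forall fun n =>
        hAle (S (v n)) (by rw [← hr]; exact ⟨v n, rfl⟩))
    have hp2B : x - p1 ∈ B := by
      have ht : Tendsto (fun n => ((v n - S (v n) : ↥F) : X)) atTop (𝓝 (x - p1)) := by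
        simpa using hvx.sub hp1
      exact hBcl.mem_of_tendsto ht (Eventually.of_forall fun n => hBle _ (hker (v n)))
    refine ⟨(p1, x - p1), ⟨hp1A, hp2B, by rw [add_comm, sub_add_cancel]⟩, ?_⟩
    rintro ⟨a, b⟩ ⟨haA, hbB, hab⟩
    have h1 : a - p1 ∈ A := A.sub_mem haA hp1A
    have h2 : a - p1 ∈ B := by
      have he : a - p1 = (x - p1) - b := by rw [hab]; abel
      rw [he]
      exact B.sub_mem hp2B hbB
    have h3 : a = p1 := sub_eq_zero.mp (hdisj _ h1 h2)
    have h4 : b = x - p1 := by rw [hab, h3]; abel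
    simp only [Prod.mk.injEq]
    exact ⟨h3, h4⟩
  · -- backward
    intro hx
    choose p hpspec hpun using hx
    have hP1 : ∀ x : X, (p x).1 ∈ A := fun x => (hpspec x).1
    have hP2 : ∀ x : X, x - (p x).1 ∈ B := by
      intro x
      have h1 := (hpspec x).2.2
      have h2 := (hpspec x).2.1
      rw [sub_eq_of_eq_add' h1]; exact h2
    have hun : ∀ (x a b : X), a ∈ A → b ∈ B → x = a + b → (p x).1 = a := by
      intro x a b ha hb hab
      have := hpun x (a, b) ⟨ha, hb, hab⟩
      rw [← this]
    set Pl : X →ₗ[ℚ] X :=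
      { toFun := fun x => (p x).1
        map_add' := by
          intro x y
          exact hun (x + y) _ ((x - (p x).1) + (y - (p y).1)) (A.add_mem (hP1 x) (hP1 y))
            (B.add_mem (hP2 x) (hP2 y)) (by abel)
        map_smul' := by
          intro q x
          simp only [RingHom.id_apply]
          refine hun (q • x) _ (q • (x - (p x).1)) (A.smul_mem q (hP1 x))
            (B.smul_mem q (hP2 x)) ?_
          rw [← smul_add]
          congr 1
          abel } with hPl
    have hPlc : Continuous Pl := by
      apply Pl.continuous_of_seq_closed_graph
      intro u x y hu hy
      have hyA : y ∈ A :=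
        hAcl.mem_of_tendsto hy (Eventually.of_forall fun n => hP1 (u n))
      have hxyB : x - y ∈ B :=
        hBcl.mem_of_tendsto (f := fun n => u n - Pl (u n))
          (hu.sub hy) (Eventually.of_forall fun n => hP2 (u n))
      exact (hun x y (x - y) hyA hxyB (by abel)).symm
    have hcoe : ∀ f : ↥F, Pl (f : X) = ((S f : ↥F) : X) := by
      intro f
      refine hun (f : X) ((S f : ↥F) : X) ((f - S f : ↥F) : X) ?_ ?_ (by push_cast; abel)
      · exact hAle (S f) (by rw [← hr]; exact ⟨f, rfl⟩)
      · exact hBle _ (hker f)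
    have hc2 : Continuous (Subtype.val ∘ S : ↥F → X) := by
      have he : (Subtype.val ∘ S : ↥F → X) = Pl ∘ (Subtype.val : ↥F → X) := by
        funext f; exact (hcoe f).symm
      rw [he]
      exact hPlc.comp continuous_subtype_val
    exact continuous_induced_rng.mpr hc2
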